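/- Let n ≥ 2 and let P(z) = ∏_{j=1}^{n}(z - z_j) be a monic polynomial of degree n whose zeros z_1, …, z_n all lie in the closed unit disk |z| ≤ 1, and suppose P(0) = 0 (i.e. some z_j equals 0). Then for every j ∈ {1, …, n} there exists w ∈ ℂ with P'(w) = 0 and |w - z_j| ≤ 1. -/

import Mathlib

open Polynomial
open scoped BigOperators ComplexConjugate

noncomputable section

namespace SendovAux

lemma two_mul_sum_le (a : ℝ) (t : Multiset ℝ) :
    2 * a * t.sum ≤ (Multiset.card t : ℝ) * a ^ 2 + (t.map (fun x => x ^ 2)).sum := by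
  induction t using Multiset.induction with
  | empty => simp
  | cons b t ih =>
    simp only [Multiset.sum_cons, Multiset.map_cons, Multiset.card_cons]
    push_cast
    nlinarith [sq_nonneg (a - b)]

lemma ms_sq_sum_le (s : Multiset ℝ) :
    s.sum ^ 2 ≤ (Multiset.card s : ℝ) * (s.map (fun x => x ^ 2)).sum := by
  induction s using Multiset.induction with
  | empty => simp
  | cons a t ih =>
    simp only [Multiset.sum_cons, Multiset.map_cons, Multiset.card_cons]
    push_cast
    nlinarith [two_mul_sum_le a t, ih]

lemma ms_sum_pos (s : Multiset ℝ) (h : ∀ x ∈ s, 0 < x) (hs : s ≠ 0) : 0 < s.sum := by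
  induction s using Multiset.induction with
  | empty => exact absurd rfl hs
  | cons a t _ =>
    rw [Multiset.sum_cons]
    have ha := h a (Multiset.mem_cons_self a t)
    have ht : (0:ℝ) ≤ t.sum :=
      Multiset.sum_nonneg (fun x hx => (h x (Multiset.mem_cons_of_mem hx)).le)
    linarith

lemma re_ms_sum (s : Multiset ℂ) : s.sum.re = (s.map Complex.re).sum :=
  map_multiset_sum Complex.reAddGroupHom s

/-- Key scalar estimate: if all `v ∈ s` have `δ ≤ v.re` and `1 ≤ card s ≤ m`, then
`W = Σ v⁻¹` is nonzero and `δ ≤ (m / W).re`. -/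
lemma key_inv_sum (m : ℕ) (s : Multiset ℂ) (δ : ℝ) (hδ : 0 < δ)
    (hcard : s ≠ 0) (hm : Multiset.card s ≤ m)
    (hre : ∀ v ∈ s, δ ≤ v.re) :
    (s.map (fun v => v⁻¹)).sum ≠ 0 ∧ δ ≤ ((m : ℂ) / (s.map (fun v => v⁻¹)).sum).re := by
  set W : ℂ := (s.map (fun v => v⁻¹)).sum with hW
  have hv0 : ∀ v ∈ s, v ≠ 0 := by
    intro v hv h
    have := hre v hv
    rw [h] at this
    simp at this
    linarith
  -- N := Σ 1/normSq v
  set N : ℝ := (s.map (fun v => (Complex.normSq v)⁻¹)).sum with hN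
  have hNpos : 0 < N := by
    apply ms_sum_pos
    · intro x hx
      rw [Multiset.mem_map] at hx
      obtain ⟨v, hv, rfl⟩ := hx
      exact inv_pos.mpr (Complex.normSq_pos.mpr (hv0 v hv))
    · simpa using fun h => hcard (by simpa [h] using congrArg Multiset.card (by simp [h] : s.map (fun v => (Complex.normSq v)⁻¹) = 0))
  -- W.re ≥ δ N
  have hWre : δ * N ≤ W.re := by
    rw [hW, re_ms_sum, Multiset.map_map, hN]
    rw [← Multiset.sum_map_mul_left]
    apply Multiset.sum_map_le_sum_map
    intro v hv
    simp only [Function.comp_apply, Complex.inv_re]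
    have h1 : (0:ℝ) < Complex.normSq v := Complex.normSq_pos.mpr (hv0 v hv)
    rw [div_eq_mul_inv]
    exact mul_le_mul_of_nonneg_right (hre v hv) (inv_nonneg.mpr h1.le)
  have hWrepos : 0 < W.re := lt_of_lt_of_le (by positivity) hWre
  have hWne : W ≠ 0 := fun h => by rw [h] at hWrepos; simp at hWrepos
  refine ⟨hWne, ?_⟩
  -- bound |W|² ≤ card * N
  have habs : ‖W‖ ≤ (s.map (fun v => (‖v‖)⁻¹)).sum := by
    rw [hW]
    simpa [Multiset.map_map, Function.comp, norm_inv] using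
      norm_multiset_sum_le (s.map (fun v => v⁻¹))
  have hsq : ((s.map (fun v => (‖v‖)⁻¹)).sum) ^ 2
      ≤ (Multiset.card s : ℝ) * N := by
    refine le_trans (ms_sq_sum_le _) ?_
    rw [Multiset.card_map, Multiset.map_map]
    apply mul_le_mul_of_nonneg_left _ (Nat.cast_nonneg _)
    apply le_of_eq
    congr 1
    apply Multiset.map_congr rfl
    intro v _
    simp only [Function.comp_apply]
    rw [inv_pow, Complex.sq_norm]
  have hnormSqW : Complex.normSq W ≤ (Multiset.card s : ℝ) * N := by
    rw [← Complex.sq_norm]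
    refine le_trans ?_ hsq
    have h0 : 0 ≤ ‖W‖ := norm_nonneg W
    nlinarith [habs]
  -- conclude
  have hdiv : ((m : ℂ) / W).re = (m : ℝ) * W.re / Complex.normSq W := by
    rw [Complex.div_re]
    simp
  rw [hdiv]
  rw [le_div_iff₀ (Complex.normSq_pos.mpr hWne)]
  have hcs : (Multiset.card s : ℝ) ≤ (m : ℝ) := Nat.cast_le.mpr hm
  calc δ * Complex.normSq W ≤ δ * ((Multiset.card s : ℝ) * N) := by
        exact mul_le_mul_of_nonneg_left hnormSqW hδ.le
    _ = (Multiset.card s : ℝ) * (δ * N) := by ring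
    _ ≤ (m:ℝ) * (δ * N) := mul_le_mul_of_nonneg_right hcs (by positivity)
    _ ≤ (m:ℝ) * W.re := by
        apply mul_le_mul_of_nonneg_left hWre (Nat.cast_nonneg _)

/-- evaluation of a multiset product of linear factors -/
lemma eval_prod_ms (s : Multiset ℂ) (u : ℂ) :
    eval u ((s.map (fun r => X - C r)).prod) = (s.map (fun r => u - r)).prod := by
  rw [eval_multiset_prod, Multiset.map_map]
  congr 1
  apply Multiset.map_congr rfl
  intro r _
  simp

/-- logarithmic derivative of a multiset product of linear factors -/
lemma eval_derivative_prod_ms (s : Multiset ℂ) (u : ℂ) (h : ∀ r ∈ s, u - r ≠ 0) :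
    eval u (derivative (s.map (fun r => X - C r)).prod)
      = eval u ((s.map (fun r => X - C r)).prod) * (s.map (fun r => (u - r)⁻¹)).sum := by
  induction s using Multiset.induction with
  | empty => simp
  | cons a t ih =>
    have ha : u - a ≠ 0 := h a (Multiset.mem_cons_self a t)
    have ih' := ih (fun r hr => h r (Multiset.mem_cons_of_mem hr))
    simp only [Multiset.map_cons, Multiset.prod_cons, Multiset.sum_cons, derivative_mul,
      derivative_X_sub_C, eval_add, eval_mul, eval_one, one_mul, eval_sub, eval_X, eval_C]
    rw [ih']
    field_simp

/-- the linear functional giving the half plane -/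
def lhp (b z : ℂ) : ℝ := ((starRingEnd ℂ) b * z).re

lemma lhp_sub (b z w : ℂ) : lhp b (z - w) = lhp b z - lhp b w := by
  simp [lhp, mul_sub]

/-- Laguerre's theorem for half planes: if all roots of `A` lie in the closed half plane
`{z : c ≤ lhp b z}` and `ζ` is outside it, then all roots of the polar derivative
`m•A + (ζ - X)·A'` lie in the half plane. -/
lemma laguerre (m : ℕ) (hm : 1 ≤ m) (A : ℂ[X]) (hA : A ≠ 0) (hdeg : A.natDegree ≤ m)
    (b : ℂ) (hb : ‖b‖ = 1) (c : ℝ)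
    (hroots : ∀ r, A.IsRoot r → c ≤ lhp b r)
    (ζ : ℂ) (hζ : lhp b ζ < c)
    (u : ℂ) (hu : (C (m:ℂ) * A + (C ζ - X) * derivative A).eval u = 0) :
    c ≤ lhp b u := by
  by_contra hlt
  push_neg at hlt
  have hbne : b ≠ 0 := by intro h; rw [h] at hb; simp at hb
  have hbb : (starRingEnd ℂ) b * b = 1 := by
    rw [mul_comm, Complex.mul_conj, ← Complex.sq_norm, hb]
    norm_num
  have hinvb : ((starRingEnd ℂ) b)⁻¹ = b := inv_eq_of_mul_eq_one_right hbb
  have hAu : A.eval u ≠ 0 := fun h => absurd (hroots u h) (not_le.mpr hlt)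
  have heq : (m:ℂ) * A.eval u + (ζ - u) * (derivative A).eval u = 0 := by
    simpa using hu
  have hcard : A.roots.card = A.natDegree :=
    (splits_iff_card_roots).mp (IsAlgClosed.splits A)
  have hfac := C_leadingCoeff_mul_prod_multiset_X_sub_C (p := A) hcard
  rcases eq_or_ne A.roots 0 with hs | hs
  · -- A is a nonzero constant
    have hAc : A = C A.leadingCoeff := by rw [← hfac, hs]; simp
    have hd0 : derivative A = 0 := by rw [hAc]; simp
    rw [hd0] at heq
    simp only [eval_zero, mul_zero, add_zero, mul_eq_zero] at heq
    rcases heq with h | h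
    · exact (Nat.cast_ne_zero (R := ℂ)).mpr (by omega) h
    · exact hAu h
  · set s := A.roots with hsdef
    have hmem_le : ∀ r ∈ s, c ≤ lhp b r := fun r hr => hroots r (isRoot_of_mem_roots hr)
    have hune : ∀ r ∈ s, u - r ≠ 0 := by
      intro r hr h
      have hur : u = r := sub_eq_zero.mp h
      exact absurd (hur ▸ hmem_le r hr) (not_le.mpr hlt)
    have hevalA' : (derivative A).eval u = A.eval u * (s.map (fun r => (u - r)⁻¹)).sum := by
      conv_lhs => rw [← hfac]
      rw [derivative_C_mul, eval_mul, eval_C, eval_derivative_prod_ms s u hune]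
      conv_rhs => rw [← hfac]
      rw [eval_mul, eval_C]
      ring
    set T : ℂ := (s.map (fun r => (u - r)⁻¹)).sum with hT
    have heq2 : (m:ℂ) + (ζ - u) * T = 0 := by
      have : A.eval u * ((m:ℂ) + (ζ - u) * T) = 0 := by
        rw [hevalA'] at heq
        linear_combination heq
      rcases mul_eq_zero.mp this with h | h
      · exact absurd h hAu
      · exact h
    -- the shifted multiset
    set V : Multiset ℂ := s.map (fun r => (starRingEnd ℂ) b * (r - u)) with hV
    set δ : ℝ := c - lhp b u with hδdef
    have hδ : 0 < δ := by simp [hδdef]; linarith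
    have hVre : ∀ v ∈ V, δ ≤ v.re := by
      intro v hv
      rw [hV, Multiset.mem_map] at hv
      obtain ⟨r, hr, rfl⟩ := hv
      have : ((starRingEnd ℂ) b * (r - u)).re = lhp b r - lhp b u := by
        simp [lhp, mul_sub]
      rw [this]
      have := hmem_le r hr
      simp [hδdef]
      linarith
    have hVne : V ≠ 0 := by
      rw [hV]
      simpa using hs
    have hVcard : Multiset.card V ≤ m := by
      rw [hV, Multiset.card_map, hsdef, hcard]
      exact hdeg
    obtain ⟨hWne, hWre⟩ := key_inv_sum m V δ hδ hVne hVcard hVre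
    set W : ℂ := (V.map (fun v => v⁻¹)).sum with hW
    have hTW : T = -((starRingEnd ℂ) b) * W := by
      rw [hT, hW, hV, Multiset.map_map, ← Multiset.sum_map_mul_left]
      congr 1
      apply Multiset.map_congr rfl
      intro r _
      simp only [Function.comp_apply]
      rw [mul_inv, hinvb, neg_mul, ← mul_assoc, hbb, one_mul, ← inv_neg, neg_sub]
    have hTne : T ≠ 0 := by
      rw [hTW]
      intro h
      rcases mul_eq_zero.mp h with h | h
      · apply hbne
        have := congrArg (starRingEnd ℂ) (neg_eq_zero.mp h)
        simpa using this
      · exact hWne h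
    have huζ : u - ζ = (m:ℂ) / T := by
      rw [eq_div_iff hTne]
      linear_combination -heq2
    have hkey : lhp b (u - ζ) = -(((m:ℂ) / W).re) := by
      rw [huζ, hTW, lhp]
      have : (starRingEnd ℂ) b * ((m:ℂ) / (-((starRingEnd ℂ) b) * W)) = -((m:ℂ)/W) := by
        rw [div_eq_mul_inv, mul_inv, inv_neg, hinvb]
        linear_combination (-(m:ℂ) * W⁻¹) * hbb
      rw [this]
      simp
    have : lhp b u - lhp b ζ ≤ -δ := by
      rw [← lhp_sub, hkey]
      linarith
    have : c ≤ lhp b ζ := by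
      simp [hδdef] at this
      linarith
    linarith

/-- apolarity-style pairing (with factorial weights) -/
def pr (m : ℕ) (Q A : ℂ[X]) : ℂ :=
  ∑ k ∈ Finset.range (m+1),
    (-1:ℂ)^k * ((k.factorial * (m-k).factorial : ℕ) : ℂ) * Q.coeff k * A.coeff (m-k)

/-- the polar derivative (with formal degree `m`) -/
def polarD (m : ℕ) (ζ : ℂ) (A : ℂ[X]) : ℂ[X] := C (m:ℂ) * A + (C ζ - X) * derivative A

lemma coeff_polarD (m : ℕ) (ζ : ℂ) (A : ℂ[X]) (i : ℕ) :
    (polarD m ζ A).coeff i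
      = ((m:ℂ) - i) * A.coeff i + ζ * (i+1) * A.coeff (i+1) := by
  rw [polarD, coeff_add, coeff_C_mul, sub_mul, coeff_sub, coeff_C_mul, coeff_derivative]
  cases i with
  | zero =>
    have : ((X : ℂ[X]) * derivative A).coeff 0 = 0 := by
      rw [mul_coeff_zero, coeff_X_zero, zero_mul]
    rw [this]
    push_cast
    ring
  | succ j =>
    rw [coeff_X_mul, coeff_derivative]
    push_cast
    ring

lemma natDegree_polarD_le (m : ℕ) (ζ : ℂ) (A : ℂ[X]) (hA : A.natDegree ≤ m+1) :
    (polarD (m+1) ζ A).natDegree ≤ m := by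
  rw [natDegree_le_iff_coeff_eq_zero]
  intro N hN
  rw [coeff_polarD]
  rcases eq_or_lt_of_le (Nat.succ_le_of_lt hN) with h | h
  · -- N = m+1
    have h1 : A.coeff (N+1) = 0 := coeff_eq_zero_of_natDegree_lt (by omega)
    rw [h1, ← h]
    push_cast
    ring
  · have h1 : A.coeff (N+1) = 0 := coeff_eq_zero_of_natDegree_lt (by omega)
    have h2 : A.coeff N = 0 := coeff_eq_zero_of_natDegree_lt (by omega)
    rw [h1, h2]
    ring

/-- the key inheritance identity for the pairing -/
lemma pr_step (m : ℕ) (ζ : ℂ) (R A : ℂ[X]) (hR : R.coeff (m+1) = 0) :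
    pr (m+1) ((X - C ζ) * R) A = - pr m R (polarD (m+1) ζ A) := by
  have hQc : ∀ k, ((X - C ζ) * R).coeff k = (X * R).coeff k - ζ * R.coeff k := by
    intro k
    rw [sub_mul, coeff_sub, coeff_C_mul]
  rw [pr]
  simp only [hQc]
  have hsplit : ∀ k ∈ Finset.range (m+2),
      (-1:ℂ)^k * ((k.factorial * (m+1-k).factorial : ℕ) : ℂ)
        * ((X * R).coeff k - ζ * R.coeff k) * A.coeff (m+1-k)
      = ((-1:ℂ)^k * ((k.factorial * (m+1-k).factorial : ℕ) : ℂ)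
          * (X * R).coeff k * A.coeff (m+1-k))
        - ζ * ((-1:ℂ)^k * ((k.factorial * (m+1-k).factorial : ℕ) : ℂ)
          * R.coeff k * A.coeff (m+1-k)) := by
    intro k _
    ring
  rw [Finset.sum_congr rfl hsplit, Finset.sum_sub_distrib]
  -- first sum : shift index
  have hfirst : ∑ k ∈ Finset.range (m+2),
      (-1:ℂ)^k * ((k.factorial * (m+1-k).factorial : ℕ) : ℂ)
        * (X * R).coeff k * A.coeff (m+1-k)
      = ∑ j ∈ Finset.range (m+1),
        (-1:ℂ)^(j+1) * (((j+1).factorial * (m-j).factorial : ℕ) : ℂ)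
          * R.coeff j * A.coeff (m-j) := by
    rw [Finset.sum_range_succ']
    have h0 : ((X : ℂ[X]) * R).coeff 0 = 0 := by
      rw [mul_coeff_zero, coeff_X_zero, zero_mul]
    rw [h0]
    simp only [mul_zero, zero_mul, add_zero]
    apply Finset.sum_congr rfl
    intro j hj
    rw [Finset.mem_range] at hj
    have hj' : j ≤ m := by omega
    have h1 : m + 1 - (j+1) = m - j := by omega
    rw [coeff_X_mul, h1]
  -- second sum : drop last term
  have hsecond : ∑ k ∈ Finset.range (m+2),
      ζ * ((-1:ℂ)^k * ((k.factorial * (m+1-k).factorial : ℕ) : ℂ)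
        * R.coeff k * A.coeff (m+1-k))
      = ∑ j ∈ Finset.range (m+1),
        ζ * ((-1:ℂ)^j * ((j.factorial * (m+1-j).factorial : ℕ) : ℂ)
          * R.coeff j * A.coeff (m+1-j)) := by
    rw [Finset.sum_range_succ, hR]
    simp
  rw [hfirst, hsecond, pr]
  have hterm : ∀ j ∈ Finset.range (m+1),
      (-1:ℂ)^j * ((j.factorial * (m-j).factorial : ℕ) : ℂ) * R.coeff j
          * (polarD (m+1) ζ A).coeff (m-j)
      = ζ * ((-1:ℂ)^j * ((j.factorial * (m+1-j).factorial : ℕ) : ℂ)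
            * R.coeff j * A.coeff (m+1-j))
        - (-1:ℂ)^(j+1) * (((j+1).factorial * (m-j).factorial : ℕ) : ℂ)
            * R.coeff j * A.coeff (m-j) := by
    intro j hj
    rw [Finset.mem_range] at hj
    have hj' : j ≤ m := by omega
    rw [coeff_polarD]
    rw [show m + 1 - j = (m - j) + 1 from by omega]
    rw [Nat.factorial_succ ((m:ℕ) - j), Nat.factorial_succ j]
    push_cast [Nat.cast_sub hj']
    ring
  rw [Finset.sum_congr rfl hterm, Finset.sum_sub_distrib]
  ring

/-- Grace-type theorem for closed half planes. -/
lemma grace (b : ℂ) (hb : ‖b‖ = 1) (c : ℝ) :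
    ∀ m : ℕ, ∀ Q A : ℂ[X], Q ≠ 0 → Q.natDegree = m → A ≠ 0 → A.natDegree ≤ m →
      pr m Q A = 0 → (∀ r, A.IsRoot r → c ≤ lhp b r) →
      ∃ u, Q.IsRoot u ∧ c ≤ lhp b u := by
  intro m
  induction m with
  | zero =>
    intro Q A hQ hQd hA hAd hpr _
    exfalso
    have hq : Q.coeff 0 ≠ 0 := by
      have := Polynomial.leadingCoeff_ne_zero.mpr hQ
      rwa [leadingCoeff, hQd] at this
    have ha : A.coeff 0 ≠ 0 := by
      have := Polynomial.leadingCoeff_ne_zero.mpr hA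
      rwa [leadingCoeff, Nat.le_zero.mp hAd] at this
    rw [pr] at hpr
    simp at hpr
    rcases hpr with h | h
    · exact hq h
    · exact ha h
  | succ m ih =>
    intro Q A hQ hQd hA hAd hpr hroots
    by_cases hex : ∃ u, Q.IsRoot u ∧ c ≤ lhp b u
    · exact hex
    exfalso
    push_neg at hex
    have hdeg0 : (0:WithBot ℕ) < Q.degree := by
      rw [degree_eq_natDegree hQ, hQd]
      exact_mod_cast Nat.succ_pos m
    obtain ⟨ζ, hζroot⟩ := Complex.exists_root hdeg0
    have hζ : lhp b ζ < c := hex ζ hζroot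
    obtain ⟨R, hQfac⟩ := (dvd_iff_isRoot.mpr hζroot)
    have hRne : R ≠ 0 := by
      rintro rfl
      rw [mul_zero] at hQfac
      exact hQ hQfac
    have hXζ : (X - C ζ : ℂ[X]) ≠ 0 := X_sub_C_ne_zero ζ
    have hRd : R.natDegree = m := by
      have h := hQd
      rw [hQfac, natDegree_mul hXζ hRne, natDegree_X_sub_C] at h
      omega
    have hRcoeff : R.coeff (m+1) = 0 := coeff_eq_zero_of_natDegree_lt (by omega)
    by_cases hAζ : polarD (m+1) ζ A = 0
    · have h1 : ((m+1 : ℕ):ℂ) * A.eval ζ = 0 := by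
        have h := congrArg (eval ζ) hAζ
        rw [polarD] at h
        simpa using h
      have h2 : A.IsRoot ζ := by
        rcases mul_eq_zero.mp h1 with h | h
        · exact absurd h (by exact_mod_cast Nat.succ_ne_zero m)
        · exact h
      exact absurd (hroots ζ h2) (not_le.mpr hζ)
    · have hAζd : (polarD (m+1) ζ A).natDegree ≤ m := natDegree_polarD_le m ζ A hAd
      have hpr' : pr m R (polarD (m+1) ζ A) = 0 := by
        have h := pr_step m ζ R A hRcoeff
        rw [← hQfac, hpr] at h
        exact neg_eq_zero.mp h.symm
      have hroots' : ∀ r, (polarD (m+1) ζ A).IsRoot r → c ≤ lhp b r := by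
        intro r hr
        rw [IsRoot, polarD] at hr
        exact laguerre (m+1) (by omega) A hA hAd b hb c hroots ζ hζ r hr
      obtain ⟨u, hu, hcu⟩ := ih R (polarD (m+1) ζ A) hRne hRd hAζ hAζd hpr' hroots'
      have hQu : Q.IsRoot u := by
        rw [hQfac, IsRoot, eval_mul]
        rw [IsRoot] at hu
        rw [hu, mul_zero]
      exact absurd hcu (not_le.mpr (hex u hQu))

/-- Gauss–Lucas for a product of linear factors with roots in the unit disk -/
lemma gauss_lucas (n : ℕ) (hn : 1 ≤ n) (z : Fin n → ℂ) (hdisk : ∀ j, ‖(z j)‖ ≤ 1)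
    (u : ℂ) (hu : (derivative (∏ j : Fin n, (X - C (z j)))).eval u = 0) :
    ‖u‖ ≤ 1 := by
  by_contra h1
  push_neg at h1
  set s : Multiset ℂ := Finset.univ.val.map z with hs
  have hPs : (∏ j : Fin n, (X - C (z j))) = (s.map (fun r => X - C r)).prod := by
    rw [Finset.prod_eq_multiset_prod, hs, Multiset.map_map]
    rfl
  have hmem : ∀ r ∈ s, ‖r‖ ≤ 1 := by
    intro r hr
    rw [hs, Multiset.mem_map] at hr
    obtain ⟨j, _, rfl⟩ := hr
    exact hdisk j
  have hune : ∀ r ∈ s, u - r ≠ 0 := by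
    intro r hr h
    have hur : u = r := sub_eq_zero.mp h
    rw [hur] at h1
    exact absurd (hmem r hr) (not_le.mpr h1)
  have hPune : eval u ((s.map (fun r => X - C r)).prod) ≠ 0 := by
    rw [eval_prod_ms]
    apply Multiset.prod_ne_zero
    rw [Multiset.mem_map]
    rintro ⟨r, hr, h⟩
    exact hune r hr h
  rw [hPs, eval_derivative_prod_ms s u hune] at hu
  have hT : (s.map (fun r => (u - r)⁻¹)).sum = 0 := by
    rcases mul_eq_zero.mp hu with h | h
    · exact absurd h hPune
    · exact h
  have hscard : s ≠ 0 := by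
    intro h0
    have hc : Multiset.card s = n := by simp [hs]
    rw [h0] at hc
    simp at hc
    omega
  have hpos : 0 < (u * (s.map (fun r => (u - r)⁻¹)).sum).re := by
    rw [← Multiset.sum_map_mul_left, re_ms_sum, Multiset.map_map]
    apply ms_sum_pos
    · intro x hx
      rw [Multiset.mem_map] at hx
      obtain ⟨r, hr, rfl⟩ := hx
      simp only [Function.comp_apply]
      have hw : u - r ≠ 0 := hune r hr
      have hw' : (0:ℝ) < Complex.normSq (u - r) := Complex.normSq_pos.mpr hw
      have key : 0 < (u * (starRingEnd ℂ) (u - r)).re := by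
        have e1 : (u * (starRingEnd ℂ) (u - r)).re = Complex.normSq u - (u * (starRingEnd ℂ) r).re := by
          rw [map_sub, mul_sub, Complex.mul_conj]
          simp
        rw [e1]
        have h2 : (u * (starRingEnd ℂ) r).re ≤ ‖u‖ * ‖r‖ := by
          calc (u * (starRingEnd ℂ) r).re ≤ ‖(u * (starRingEnd ℂ) r)‖ := Complex.re_le_norm _
          _ = ‖u‖ * ‖r‖ := by rw [norm_mul, Complex.norm_conj]
        have h4 : Complex.normSq u = ‖u‖ ^ 2 := (Complex.sq_norm u).symm
        nlinarith [hmem r hr, norm_nonneg u, norm_nonneg r]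
      rw [Complex.inv_def, ← mul_assoc, mul_comm (u * (starRingEnd ℂ) (u-r))]
      rw [Complex.re_ofReal_mul]
      exact mul_pos (inv_pos.mpr hw') key
    · intro h0
      rw [Multiset.map_eq_zero] at h0
      exact hscard h0
  rw [hT, mul_zero] at hpos
  simp at hpos

/-- computation of the pairing against `(X-C a)^n - X^n` -/
lemma pr_eval (n : ℕ) (hn : 1 ≤ n) (a : ℂ) (P : ℂ[X]) (hdeg : P.natDegree ≤ n) :
    pr (n-1) (derivative P) ((X - C a)^n - X^n)
      = -((n.factorial : ℕ) : ℂ) * (P.eval a - P.eval 0) := by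
  rcases n with _ | m
  · omega
  rw [show (m + 1 - 1) = m from rfl, pr]
  have hterm : ∀ k ∈ Finset.range (m+1),
      (-1:ℂ)^k * ((k.factorial * (m-k).factorial : ℕ) : ℂ) * (derivative P).coeff k
        * (((X - C a)^(m+1) - X^(m+1) : ℂ[X]).coeff (m-k))
      = -(((m+1).factorial : ℕ) : ℂ) * (P.coeff (k+1) * a^(k+1)) := by
    intro k hk
    rw [Finset.mem_range] at hk
    have hk' : k ≤ m := by omega
    have hAc : (((X - C a)^(m+1) - X^(m+1) : ℂ[X]).coeff (m-k))
        = (-a)^(k+1) * (((m+1).choose (m-k) : ℕ) : ℂ) := by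
      rw [coeff_sub, coeff_X_pow]
      rw [show (X - C a : ℂ[X]) = X + C (-a) from by rw [map_neg, sub_eq_add_neg]]
      rw [coeff_X_add_C_pow]
      rw [show m + 1 - (m - k) = k + 1 from by omega]
      rw [if_neg (by omega : ¬ (m - k = m+1))]
      push_cast
      ring
    rw [hAc, coeff_derivative]
    have hc : ((m+1).choose (m-k) : ℕ) = ((m+1).choose (k+1) : ℕ) := by
      rw [show m - k = (m+1) - (k+1) from by omega]
      exact Nat.choose_symm (by omega : k+1 ≤ m+1)
    rw [hc]
    have hfact : (k+1) * k.factorial * (m-k).factorial * ((m+1).choose (k+1)) = (m+1).factorial := by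
      have h := Nat.choose_mul_factorial_mul_factorial (show k+1 ≤ m+1 by omega)
      rw [show m+1-(k+1) = m-k from by omega, Nat.factorial_succ] at h
      calc (k+1) * k.factorial * (m-k).factorial * ((m+1).choose (k+1))
          = (m+1).choose (k+1) * ((k+1) * k.factorial) * (m-k).factorial := by ring
        _ = (m+1).factorial := h
    have hfactC : ((k:ℂ)+1) * (k.factorial : ℕ) * ((m-k).factorial : ℕ)
        * (((m+1).choose (k+1) : ℕ) : ℂ) = (((m+1).factorial : ℕ) : ℂ) := by
      have := congrArg (Nat.cast : ℕ → ℂ) hfact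
      push_cast at this
      linear_combination this
    have hsign : (-1:ℂ)^k * (-a)^(k+1) = -(a^(k+1)) := by
      rw [neg_pow a, pow_succ (-1:ℂ) k, ← mul_assoc]
      rw [show (-1:ℂ)^k * ((-1:ℂ)^k * (-1:ℂ)) = ((-1:ℂ)*(-1:ℂ))^k * (-1:ℂ) from by rw [mul_pow]; ring]
      norm_num
    calc (-1:ℂ)^k * ((k.factorial * (m-k).factorial : ℕ) : ℂ) * (P.coeff (k+1) * ((k:ℕ)+1))
          * ((-a)^(k+1) * (((m+1).choose (k+1) : ℕ) : ℂ))
        = ((-1:ℂ)^k * (-a)^(k+1)) * (((k:ℂ)+1) * (k.factorial : ℕ) * ((m-k).factorial : ℕ)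
            * (((m+1).choose (k+1) : ℕ) : ℂ)) * P.coeff (k+1) := by push_cast; ring
      _ = -(a^(k+1)) * (((m+1).factorial : ℕ) : ℂ) * P.coeff (k+1) := by rw [hfactC, hsign]
      _ = -(((m+1).factorial : ℕ) : ℂ) * (P.coeff (k+1) * a^(k+1)) := by ring
  rw [Finset.sum_congr rfl hterm, ← Finset.mul_sum]
  have heval : P.eval a = ∑ k ∈ Finset.range (m+2), P.coeff k * a^k :=
    eval_eq_sum_range' (by omega) a
  rw [Finset.sum_range_succ'] at heval
  have h0 : P.eval 0 = P.coeff 0 := (coeff_zero_eq_eval_zero P).symm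
  rw [heval, h0]
  ring

lemma pow_eq_nonneg {x y : ℝ} (hx : 0 ≤ x) (hy : 0 ≤ y) {n : ℕ} (hn : n ≠ 0)
    (h : x^n = y^n) : x = y := by
  rcases lt_trichotomy x y with hl | he | hl
  · exact absurd h (ne_of_lt (pow_lt_pow_left₀ hl hx hn))
  · exact he
  · exact absurd h.symm (ne_of_lt (pow_lt_pow_left₀ hl hy hn))

end SendovAux

open SendovAux in
/-- Remark 2: Sendov's conjecture holds when `P(0) = 0` (zeros not necessarily simple). -/
theorem stmt_19 (n : ℕ) (hn : 2 ≤ n) (z : Fin n → ℂ)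
    (hdisk : ∀ j, ‖(z j)‖ ≤ 1)
    (P : ℂ[X]) (hP : P = ∏ j : Fin n, (X - C (z j)))
    (h0 : P.eval 0 = 0) :
    ∀ j : Fin n, ∃ w : ℂ, (Polynomial.derivative P).eval w = 0 ∧ ‖(w - z j)‖ ≤ 1 := by
  intro j
  set a := z j with ha
  have hPmono : P.Monic := by
    rw [hP]
    exact monic_prod_of_monic _ _ (fun i _ => monic_X_sub_C (z i))
  have hPdeg : P.natDegree = n := by
    rw [hP, natDegree_prod _ _ (fun i _ => X_sub_C_ne_zero (z i))]
    simp [natDegree_X_sub_C]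
  have hPcn : P.coeff n = 1 := by
    have h := hPmono.coeff_natDegree
    rwa [hPdeg] at h
  have hQc : (derivative P).coeff (n-1) = ((n:ℕ):ℂ) := by
    rw [coeff_derivative, show n - 1 + 1 = n from by omega, hPcn, one_mul]
    push_cast [Nat.cast_sub (by omega : 1 ≤ n)]
    ring
  have hQne : derivative P ≠ 0 := by
    intro h
    rw [h, coeff_zero] at hQc
    exact (Nat.cast_ne_zero (R := ℂ)).mpr (by omega) hQc.symm
  have hQdeg : (derivative P).natDegree = n - 1 := by
    refine le_antisymm ((natDegree_derivative_le P).trans (le_of_eq (by rw [hPdeg]))) ?_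
    apply le_natDegree_of_ne_zero
    rw [hQc]
    exact (Nat.cast_ne_zero (R := ℂ)).mpr (by omega)
  have hGL : ∀ u : ℂ, (derivative P).eval u = 0 → ‖u‖ ≤ 1 := by
    intro u hu
    apply gauss_lucas n (by omega) z hdisk u
    rw [← hP]
    exact hu
  have hPa : P.eval a = 0 := by
    rw [hP, eval_prod]
    apply Finset.prod_eq_zero (Finset.mem_univ j)
    simp [ha]
  by_cases haz : a = 0
  · have hd : (0:WithBot ℕ) < (derivative P).degree := by
      rw [degree_eq_natDegree hQne, hQdeg]
      exact_mod_cast (by omega : 0 < n - 1)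
    obtain ⟨u, hu⟩ := Complex.exists_root hd
    refine ⟨u, hu, ?_⟩
    rw [haz, sub_zero]
    exact hGL u hu
  · have habs0 : ‖a‖ ≠ 0 := fun h => haz (norm_eq_zero.mp h)
    have habspos : 0 < ‖a‖ := lt_of_le_of_ne (norm_nonneg a) (Ne.symm habs0)
    set b : ℂ := (↑(‖a‖))⁻¹ * a with hbdef
    have hb : ‖b‖ = 1 := by
      rw [hbdef, norm_mul, norm_inv, Complex.norm_real, Real.norm_eq_abs, abs_of_nonneg (norm_nonneg a)]
      field_simp
    set c : ℝ := ‖a‖ / 2 with hcdef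
    set A : ℂ[X] := (X - C a)^n - X^n with hAdef
    have hXC : (X - C a : ℂ[X]) = X + C (-a) := by rw [map_neg, sub_eq_add_neg]
    have hAne : A ≠ 0 := by
      intro h
      have h2 : A.coeff (n-1) = 0 := by rw [h, coeff_zero]
      rw [hAdef, coeff_sub, coeff_X_pow, hXC, coeff_X_add_C_pow,
        show n - (n-1) = 1 from by omega, if_neg (by omega : ¬ (n - 1 = n))] at h2
      simp only [pow_one, sub_zero] at h2
      rcases mul_eq_zero.mp h2 with h3 | h3
      · exact haz (neg_eq_zero.mp h3)
      · have : (n.choose (n-1) : ℂ) ≠ 0 := by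
          have : 0 < n.choose (n-1) := Nat.choose_pos (by omega)
          exact_mod_cast Nat.pos_iff_ne_zero.mp this
        exact this h3
    have hAdeg : A.natDegree ≤ n - 1 := by
      rw [natDegree_le_iff_coeff_eq_zero]
      intro N hN
      have hNn : n ≤ N := by omega
      rw [hAdef, coeff_sub, coeff_X_pow, hXC, coeff_X_add_C_pow]
      rcases eq_or_lt_of_le hNn with h | h
      · rw [← h, if_pos rfl, Nat.sub_self, pow_zero, one_mul, Nat.choose_self]
        norm_num
      · rw [if_neg (by omega : ¬ (N = n)), Nat.choose_eq_zero_of_lt h]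
        norm_num
    have hlhp : ∀ w : ℂ, lhp b w = (‖a‖)⁻¹ * ((starRingEnd ℂ) a * w).re := by
      intro w
      rw [lhp, hbdef, map_mul, map_inv₀, Complex.conj_ofReal, mul_assoc,
        ← Complex.ofReal_inv, Complex.re_ofReal_mul]
    have hroots : ∀ r : ℂ, A.IsRoot r → c ≤ lhp b r := by
      intro r hr
      rw [IsRoot, hAdef, eval_sub, eval_pow, eval_pow, eval_sub, eval_X, eval_C,
        sub_eq_zero] at hr
      have habs : ‖(r - a)‖ = ‖r‖ := by
        have h := congrArg norm hr
        rw [norm_pow, norm_pow] at h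
        exact pow_eq_nonneg (norm_nonneg _) (norm_nonneg _) (by omega) h
      have h3 : Complex.normSq (r - a) = Complex.normSq r := by
        rw [← Complex.sq_norm, ← Complex.sq_norm r, habs]
      rw [Complex.normSq_sub] at h3
      have hre : ((starRingEnd ℂ) a * r).re = Complex.normSq a / 2 := by
        rw [mul_comm]
        linarith
      rw [hlhp, hre, hcdef]
      rw [← Complex.sq_norm]
      apply le_of_eq
      field_simp
    have hpr0 : pr (n-1) (derivative P) A = 0 := by
      rw [hAdef, pr_eval n (by omega) a P (le_of_eq hPdeg), hPa, h0]
      ring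
    obtain ⟨u, hu, hcu⟩ :=
      grace b hb c (n-1) (derivative P) A hQne hQdeg hAne hAdeg hpr0 hroots
    refine ⟨u, hu, ?_⟩
    have hu1 : ‖u‖ ≤ 1 := hGL u hu
    rw [hlhp, hcdef] at hcu
    have h5 : Complex.normSq a / 2 ≤ ((starRingEnd ℂ) a * u).re := by
      rw [← Complex.sq_norm]
      have := mul_le_mul_of_nonneg_left hcu habspos.le
      rw [← mul_assoc, mul_inv_cancel₀ habs0, one_mul] at this
      nlinarith
    have h6 : Complex.normSq (u - a) ≤ 1 := by
      rw [Complex.normSq_sub]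
      have hnu : Complex.normSq u ≤ 1 := by
        rw [← Complex.sq_norm]
        nlinarith [norm_nonneg u]
      have hswap : (u * (starRingEnd ℂ) a).re = ((starRingEnd ℂ) a * u).re := by
        rw [mul_comm]
      linarith
    have h7 : ‖(u - a)‖ ^ 2 ≤ 1 := by
      rw [Complex.sq_norm]
      exact h6
    nlinarith [norm_nonneg (u - a)]
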